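/- Let d ≥ 2, let X : [0,T] → ℝ^d be a path, and let Q : ℝ^d → ℝ^d be the orthogonal projection onto the hyperplane {x₁ = 0}. Then ⟨σ(X), w⟩ = 0 for every word w containing the letter 1 if and only if σ(X) = σ(QX) as linear functionals on T(ℝ^d), i.e. if and only if σ(X) is the signature of a path contained in the hyperplane {x₁ = 0}. Moreover, ℐ({paths contained in the hyperplane x₁ = 0}) equals exactly the linear span of the words containing the letter 1. -/

import Mathlib

open scoped BigOperators TensorProduct

namespace PathVarieties

/-- Words over an alphabet `α`; the letters `{1,…,d}` of `ℝ^d` correspond to `α = Fin d`. -/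
abbrev Word (α : Type*) := List α

/-- The tensor algebra `T(ℝ^d)`, identified with the free real vector space on words. -/
abbrev TA (α : Type*) := Word α →₀ ℝ

/-- The list of all (riffle) shuffles of two words. -/
def shuffles {α : Type*} : Word α → Word α → List (Word α)
  | [], v => [v]
  | a :: u, [] => [a :: u]
  | a :: u, b :: v =>
      ((shuffles u (b :: v)).map (a :: ·)) ++ ((shuffles (a :: u) v).map (b :: ·))
termination_by u v => u.length + v.length
decreasing_by all_goals (simp only [List.length_cons]; omega)

/-- Shuffle product of two words, as an element of `T(ℝ^d)`. -/
noncomputable def shw {α : Type*} (u v : Word α) : TA α :=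
  ((shuffles u v).map fun w => Finsupp.single w (1 : ℝ)).sum

/-- The shuffle product `⧢` on `T(ℝ^d)`, the bilinear extension of the shuffle of words. -/
noncomputable def sh {α : Type*} (x y : TA α) : TA α :=
  x.sum fun u cu => y.sum fun v cv => (cu * cv) • shw u v

/-- Right halfshuffle `u ≻ v` of words (`v` nonempty): shuffle `u` with `v` minus its
last letter, then append the last letter of `v`.  (This is the unique bilinear operation
with `w ≻ a = wa` and `w ≻ (va) = (w≻v + v≻w)a`.) -/
noncomputable def rshw {α : Type*} (u v : Word α) : TA α :=
  ((shuffles u v.dropLast).map fun w =>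
    Finsupp.single (w ++ v.drop (v.length - 1)) (1 : ℝ)).sum

/-- Right halfshuffle `≻` on `T^{≥1}(ℝ^d)`, extended bilinearly. -/
noncomputable def rsh {α : Type*} (x y : TA α) : TA α :=
  x.sum fun u cu => y.sum fun v cv => (cu * cv) • rshw u v

/-- Left halfshuffle `u ≺ v` of words (`u` nonempty): the first letter of `u` followed by
the shuffle of the rest of `u` with `v`.  (This is the unique bilinear operation with
`a ≺ w = aw` and `(av) ≺ w = a(w≺v + v≺w)`.) -/
noncomputable def lshw {α : Type*} (u v : Word α) : TA α :=
  ((shuffles u.tail v).map fun w => Finsupp.single (u.take 1 ++ w) (1 : ℝ)).sum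

/-- Left halfshuffle `≺` on `T^{≥1}(ℝ^d)`, extended bilinearly. -/
noncomputable def lsh {α : Type*} (x y : TA α) : TA α :=
  x.sum fun u cu => y.sum fun v cv => (cu * cv) • lshw u v

/-- The antipode `𝒜`, with `𝒜(i₁⋯iₙ) = (−1)ⁿ iₙ⋯i₁`. -/
noncomputable def antipode {α : Type*} (x : TA α) : TA α :=
  x.sum fun w c => Finsupp.single w.reverse (((-1 : ℝ) ^ w.length) * c)

/-- Helper for `Λ_B`: value on a reversed word. -/
noncomputable def lamRev {α β : Type*} (B : α → TA β) : Word α → TA β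
  | [] => Finsupp.single [] 1
  | [i] => B i
  | i :: w => rsh (lamRev B w) (B i)

/-- `Λ_B` on a word: `Λ_B e = e`, `Λ_B i = B i`, `Λ_B (w·i) = (Λ_B w) ≻ (Λ_B i)`. -/
noncomputable def lamW {α β : Type*} (B : α → TA β) (w : Word α) : TA β :=
  lamRev B w.reverse

/-- The linear map `Λ_B : T(ℝ^t) → T(ℝ^d)` induced by `B` on letters. -/
noncomputable def Lam {α β : Type*} (B : α → TA β) (x : TA α) : TA β :=
  x.sum fun w c => c • lamW B w

/-- `splitEmb e j n w = Σ_{w = u₁⋯uₙ} e_j(u₁) ⧢ e_{j+1}(u₂) ⧢ ⋯ ⧢ e_{j+n−1}(uₙ)`,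
the sum over all splittings of `w` into `n` consecutive (possibly empty) factors,
each factor relabelled letterwise by `e`. -/
noncomputable def splitEmb {α β : Type*} (e : ℕ → α → β) : ℕ → ℕ → Word α → TA β
  | _, 0, w => if w.isEmpty then Finsupp.single ([] : Word β) (1 : ℝ) else 0
  | j, k + 1, w => ∑ m ∈ Finset.range (w.length + 1),
      sh (Finsupp.single ((w.take m).map (e j)) (1 : ℝ)) (splitEmb e (j + 1) k (w.drop m))

/-- `Σ_{x=uv} f(u)·v`: deconcatenate, evaluate the functional `f` on prefixes. -/
noncomputable def leftAct {α : Type*} (f : Word α → ℝ) (x : TA α) : TA α :=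
  x.sum fun w c => c • ∑ k ∈ Finset.range (w.length + 1),
    f (w.take k) • Finsupp.single (w.drop k) (1 : ℝ)

/-- `Σ_{x=uv} u·f(v)`: deconcatenate, evaluate the functional `f` on suffixes. -/
noncomputable def rightAct {α : Type*} (f : Word α → ℝ) (x : TA α) : TA α :=
  x.sum fun w c => c • ∑ k ∈ Finset.range (w.length + 1),
    f (w.drop k) • Finsupp.single (w.take k) (1 : ℝ)

/-- A raw path: a time horizon `T` together with a map `ℝ → ℝ^α`
(only the restriction to `[0,T]` is relevant). -/
structure RawPath (α : Type*) where
  T : ℝ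
  toFun : ℝ → α → ℝ

/-- A path: positive time horizon, continuous on `[0,T]` and piecewise continuously
differentiable there (witnessed by a partition `0 = τ₀ < τ₁ < ⋯ < τₙ = T`). -/
def IsPath {α : Type*} (X : RawPath α) : Prop :=
  0 < X.T ∧ (∀ i, ContinuousOn (fun t => X.toFun t i) (Set.Icc 0 X.T)) ∧
    ∃ (n : ℕ) (τ : Fin (n + 1) → ℝ), StrictMono τ ∧ τ 0 = 0 ∧ τ (Fin.last n) = X.T ∧
      ∀ (k : Fin n) (i : α), ContDiffOn ℝ 1 (fun t => X.toFun t i)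
        (Set.Icc (τ k.castSucc) (τ k.succ))

/-- Iterated integrals, by recursion on the reversed word:
`sigRev X (i :: w) t = ∫₀ᵗ ⟨σ(X)ₛ, w.reverse⟩ dX⁽ⁱ⁾(s)`. -/
noncomputable def sigRev {α : Type*} (X : ℝ → α → ℝ) : Word α → ℝ → ℝ
  | [], _ => 1
  | i :: w, t => ∫ s in (0 : ℝ)..t, sigRev X w s * deriv (fun u => X u i) s

/-- `⟨σ(X)_t, w⟩`, the iterated-integrals signature of `X` stopped at time `t`. -/
noncomputable def sigUpTo {α : Type*} (X : RawPath α) (t : ℝ) (w : Word α) : ℝ :=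
  sigRev X.toFun w.reverse t

/-- `⟨σ(X), w⟩`, the iterated-integrals signature of the path `X` at a word `w`. -/
noncomputable def sig {α : Type*} (X : RawPath α) (w : Word α) : ℝ :=
  sigUpTo X X.T w

/-- Pairing of a word-indexed functional with an element of `T(ℝ^d)`. -/
noncomputable def pairF {α : Type*} (f : Word α → ℝ) (x : TA α) : ℝ :=
  x.sum fun w c => c * f w

/-- `⟨σ(X), x⟩` for a tensor `x ∈ T(ℝ^d)` (linear in `x`). -/
noncomputable def pair {α : Type*} (X : RawPath α) (x : TA α) : ℝ :=
  Finsupp.linearCombination ℝ (sig X) x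

/-- The path variety `𝒱(W)` of all paths whose signature kills every element of `W`. -/
def V {α : Type*} (W : Set (TA α)) : Set (RawPath α) :=
  {X | IsPath X ∧ ∀ x ∈ W, pair X x = 0}

/-- `ℐ(M)`, the space of tensors killed by the signature of every path in `M`. -/
noncomputable def Idl {α : Type*} (M : Set (RawPath α)) : Submodule ℝ (TA α) :=
  ⨅ X ∈ M, LinearMap.ker (Finsupp.linearCombination ℝ (sig X))

/-- Concatenation `X ⊔ Y` of paths. -/
noncomputable def concat {α : Type*} (X Y : RawPath α) : RawPath α where
  T := X.T + Y.T
  toFun := fun t i =>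
    if t ≤ X.T then X.toFun t i else Y.toFun (t - X.T) i + X.toFun X.T i - Y.toFun 0 i

/-- Time reversal `⟵X`. -/
def timeRev {α : Type*} (X : RawPath α) : RawPath α :=
  ⟨X.T, fun t i => X.toFun (X.T - t) i⟩

/-- `concatIter X n = X^{⊔(n+1)}`. -/
noncomputable def concatIter {α : Type*} (X : RawPath α) : ℕ → RawPath α
  | 0 => X
  | n + 1 => concat (concatIter X n) X

/-- `X^{⊔n}`, the `n`-fold concatenation of `X` with itself (intended for `n ≥ 1`). -/
noncomputable def concatPow {α : Type*} (X : RawPath α) (n : ℕ) : RawPath α :=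
  concatIter X (n - 1)

/-- `concatFold f k = f 0 ⊔ f 1 ⊔ ⋯ ⊔ f k`. -/
noncomputable def concatFold {α : Type*} (f : ℕ → RawPath α) : ℕ → RawPath α
  | 0 => f 0
  | k + 1 => concat (concatFold f k) (f (k + 1))

/-- The deconcatenation coproduct `Δ : T(ℝ^d) → T(ℝ^d) ⊗ T(ℝ^d)`,
`Δw = Σ_{w=uv} u ⊗ v`. -/
noncomputable def deconc {α : Type*} (x : TA α) : TensorProduct ℝ (TA α) (TA α) :=
  x.sum fun w c => c • ∑ k ∈ Finset.range (w.length + 1),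
    (Finsupp.single (w.take k) (1 : ℝ)) ⊗ₜ[ℝ] (Finsupp.single (w.drop k) (1 : ℝ))



namespace S6

lemma sigRev_congr {α : Type*} {F G : ℝ → α → ℝ} :
    ∀ (w : Word α), (∀ i ∈ w, ∀ t, F t i = G t i) → sigRev F w = sigRev G w
  | [], _ => rfl
  | i :: w, h => by
    funext t
    have h1 : sigRev F w = sigRev G w :=
      sigRev_congr w (fun j hj t => h j (List.mem_cons_of_mem _ hj) t)
    have h2 : (fun u => F u i) = fun u => G u i :=
      funext fun t => h i List.mem_cons_self t
    simp only [sigRev, h1, h2]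

lemma sigRev_zero_of_const {α : Type*} (c : α) (F : ℝ → α → ℝ) (hF : ∀ t, F t c = 0) :
    ∀ w : Word α, c ∈ w → ∀ t, sigRev F w t = 0 := by
  intro w
  induction w with
  | nil => intro h; exact absurd h List.not_mem_nil
  | cons i w ih =>
    intro hmem t
    rcases List.mem_cons.mp hmem with hci | hc
    · have h2 : (fun u => F u i) = fun _ => (0:ℝ) := funext (fun t => hci ▸ hF t)
      simp only [sigRev, h2, deriv_const', mul_zero, intervalIntegral.integral_zero]
    · simp only [sigRev, ih hc, zero_mul, intervalIntegral.integral_zero]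

lemma sigRev_zero_of_Icc {α : Type*} (c : α) (F : ℝ → α → ℝ) (T : ℝ)
    (hF : ∀ t ∈ Set.Icc (0:ℝ) T, F t c = 0) :
    ∀ w : Word α, c ∈ w → ∀ t ∈ Set.Icc (0:ℝ) T, sigRev F w t = 0 := by
  intro w
  induction w with
  | nil => intro h; exact absurd h List.not_mem_nil
  | cons i w ih =>
    intro hmem t ht
    have hzero : ∀ s ∈ Set.Ioo (0:ℝ) T, sigRev F w s * deriv (fun u => F u i) s = 0 := by
      intro s hs
      rcases List.mem_cons.mp hmem with hci | hc
      · have : deriv (fun u => F u i) s = 0 := by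
          have hev : (fun u => F u i) =ᶠ[nhds s] fun _ => (0:ℝ) :=
            Filter.eventuallyEq_of_mem (Ioo_mem_nhds hs.1 hs.2)
              (fun y (hy : y ∈ Set.Ioo (0:ℝ) T) => hci ▸ hF y ⟨le_of_lt hy.1, le_of_lt hy.2⟩)
          rw [hev.deriv_eq, deriv_const']
        rw [this, mul_zero]
      · rw [ih hc s ⟨le_of_lt hs.1, le_of_lt hs.2⟩, zero_mul]
    simp only [sigRev]
    rw [intervalIntegral.integral_of_le ht.1]
    apply MeasureTheory.integral_eq_zero_of_ae
    rw [Filter.EventuallyEq, MeasureTheory.ae_restrict_iff' measurableSet_Ioc]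
    rw [MeasureTheory.ae_iff]
    refine MeasureTheory.measure_mono_null (fun s hs => ?_) (MeasureTheory.measure_singleton t)
    · show s ∈ ({t} : Set ℝ)
      simp only [Set.mem_setOf_eq, Classical.not_imp] at hs
      obtain ⟨hs1, hs2⟩ := hs
      by_contra hst
      exact hs2 (hzero s ⟨hs1.1, lt_of_le_of_ne (le_trans hs1.2 ht.2)
        (fun h => hst (le_antisymm hs1.2 (h ▸ ht.2)))⟩)


noncomputable def psi : ℝ → ℝ := deriv Real.smoothTransition

lemma psi_cont : Continuous psi :=
  (Real.smoothTransition.contDiff (n := 1)).continuous_deriv le_rfl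

lemma psi_neg {x : ℝ} (h : x < 0) : psi x = 0 := by
  have hev : Real.smoothTransition =ᶠ[nhds x] fun _ => (0:ℝ) :=
    Filter.eventuallyEq_of_mem (Iio_mem_nhds h)
      (fun y (hy : y ∈ Set.Iio (0:ℝ)) => Real.smoothTransition.zero_of_nonpos (le_of_lt hy))
  rw [psi, hev.deriv_eq, deriv_const']

lemma psi_gt_one {x : ℝ} (h : 1 < x) : psi x = 0 := by
  have hev : Real.smoothTransition =ᶠ[nhds x] fun _ => (1:ℝ) :=
    Filter.eventuallyEq_of_mem (Ioi_mem_nhds h)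
      (fun y (hy : y ∈ Set.Ioi (1:ℝ)) => Real.smoothTransition.one_of_one_le (le_of_lt hy))
  rw [psi, hev.deriv_eq, deriv_const']

lemma psi_lim_zero (c : ℝ) (S : Set ℝ) [inst : (nhdsWithin c S).NeBot]
    (hS : ∀ y ∈ S, psi y = 0) : psi c = 0 := by
  have h1 : Filter.Tendsto psi (nhdsWithin c S) (nhds (psi c)) :=
    (psi_cont.continuousAt).continuousWithinAt
  have h2 : Filter.Tendsto psi (nhdsWithin c S) (nhds 0) := by
    apply Filter.Tendsto.congr' _ tendsto_const_nhds
    filter_upwards [self_mem_nhdsWithin] with y hy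
    exact (hS y hy).symm
  exact tendsto_nhds_unique h1 h2

lemma psi_nonpos {x : ℝ} (hx : x ≤ 0) : psi x = 0 := by
  rcases lt_or_eq_of_le hx with h | h
  · exact psi_neg h
  · subst h
    exact psi_lim_zero 0 (Set.Iio 0) (fun y hy => psi_neg hy)

lemma psi_one_le {x : ℝ} (hx : 1 ≤ x) : psi x = 0 := by
  rcases lt_or_eq_of_le hx with h | h
  · exact psi_gt_one h
  · subst h
    exact psi_lim_zero 1 (Set.Ioi 1) (fun y hy => psi_gt_one hy)

/-- The smooth axis path with `m` segments, directions `jj` and amounts `aa`. -/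
noncomputable def Ypath (d m : ℕ) (jj : ℕ → Fin d) (aa : ℕ → ℝ) : RawPath (Fin d) :=
  ⟨(m : ℝ) + 1, fun t i => ∑ k ∈ Finset.range m,
    (if jj k = i then aa k else 0) * Real.smoothTransition (t - k)⟩

variable {d m : ℕ} {jj : ℕ → Fin d} {aa : ℕ → ℝ}

lemma smoothTransition_hasDeriv (k : ℕ) (t : ℝ) :
    HasDerivAt (fun z : ℝ => Real.smoothTransition (z - k)) (psi (t - k)) t := by
  have h1 : HasDerivAt (fun z : ℝ => z - (k:ℝ)) 1 t := (hasDerivAt_id t).sub_const _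
  have h2 : HasDerivAt Real.smoothTransition (psi (t - k)) (t - k) :=
    (((Real.smoothTransition.contDiff (n := 1)).differentiable one_ne_zero) (t - k)).hasDerivAt
  simpa [Function.comp_def] using h2.comp t h1

lemma Ypath_hasDeriv (i : Fin d) (t : ℝ) :
    HasDerivAt (fun z => (Ypath d m jj aa).toFun z i)
      (∑ k ∈ Finset.range m, (if jj k = i then aa k else 0) * psi (t - k)) t := by
  show HasDerivAt (fun z => ∑ k ∈ Finset.range m,
    (if jj k = i then aa k else 0) * Real.smoothTransition (z - k)) _ t
  apply HasDerivAt.fun_sum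
  intro k _
  exact (smoothTransition_hasDeriv k t).const_mul _

lemma Ypath_deriv (i : Fin d) (t : ℝ) :
    deriv (fun z => (Ypath d m jj aa).toFun z i)
      t = ∑ k ∈ Finset.range m, (if jj k = i then aa k else 0) * psi (t - k) :=
  (Ypath_hasDeriv i t).deriv

lemma Ypath_deriv_cont (i : Fin d) :
    Continuous (deriv (fun z => (Ypath d m jj aa).toFun z i)) := by
  have : deriv (fun z => (Ypath d m jj aa).toFun z i) =
      fun t => ∑ k ∈ Finset.range m, (if jj k = i then aa k else 0) * psi (t - k) :=
    funext (Ypath_deriv i)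
  rw [this]
  exact continuous_finset_sum _ (fun k _ =>
    continuous_const.mul (psi_cont.comp (continuous_id.sub continuous_const)))

lemma Ypath_deriv_eq (haa : ∀ k, m ≤ k → aa k = 0) (k : ℕ) (i : Fin d) {s : ℝ}
    (h1 : (k:ℝ) ≤ s) (h2 : s ≤ (k:ℝ) + 1) :
    deriv (fun z => (Ypath d m jj aa).toFun z i) s
      = (if jj k = i then aa k else 0) * psi (s - k) := by
  rw [Ypath_deriv]
  have hvanish : ∀ k' ∈ Finset.range m, k' ≠ k →
      (if jj k' = i then aa k' else 0) * psi (s - k') = 0 := by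
    intro k' _ hne
    rcases lt_or_gt_of_ne hne with h | h
    · have hle : (k':ℝ) + 1 ≤ k := by exact_mod_cast h
      rw [psi_one_le (by linarith), mul_zero]
    · have hle : (k:ℝ) + 1 ≤ k' := by exact_mod_cast h
      rw [psi_nonpos (by linarith), mul_zero]
  by_cases hk : k < m
  · exact Finset.sum_eq_single_of_mem k (Finset.mem_range.mpr hk) hvanish
  · rw [Finset.sum_eq_zero (fun k' hk' => hvanish k' hk'
      (by rintro rfl; exact hk (Finset.mem_range.mp hk'))), haa k (le_of_not_gt hk)]
    simp

lemma Ypath_coord_cont (i : Fin d) : Continuous (fun z => (Ypath d m jj aa).toFun z i) := by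
  show Continuous (fun z => ∑ k ∈ Finset.range m,
    (if jj k = i then aa k else 0) * Real.smoothTransition (z - k))
  exact continuous_finset_sum _ (fun k _ =>
    continuous_const.mul (Real.smoothTransition.continuous.comp
      (continuous_id.sub continuous_const)))

lemma Ypath_coord_contDiff (i : Fin d) :
    ContDiff ℝ 1 (fun z => (Ypath d m jj aa).toFun z i) := by
  show ContDiff ℝ 1 (fun z => ∑ k ∈ Finset.range m,
    (if jj k = i then aa k else 0) * Real.smoothTransition (z - k))
  apply ContDiff.sum
  intro k _
  exact ContDiff.mul contDiff_const
    ((Real.smoothTransition.contDiff).comp (contDiff_id.sub contDiff_const))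

lemma sigRev_cont : ∀ w : Word (Fin d), Continuous (sigRev (Ypath d m jj aa).toFun w)
  | [] => continuous_const
  | i :: w => by
    have hc := sigRev_cont w
    have : Continuous (fun s => sigRev (Ypath d m jj aa).toFun w s *
        deriv (fun z => (Ypath d m jj aa).toFun z i) s) := hc.mul (Ypath_deriv_cont i)
    exact intervalIntegral.continuous_primitive
      (fun a b => this.intervalIntegrable a b) 0


noncomputable def eFun (jj : ℕ → Fin d) (aa : ℕ → ℝ) : ℕ → Word (Fin d) → ℝ
  | 0, u => if u = [] then 1 else 0
  | k+1, u => ∑ r ∈ Finset.range (u.length + 1),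
      if u.take r = List.replicate r (jj k)
      then aa k ^ r / (Nat.factorial r : ℝ) * eFun jj aa k (u.drop r) else 0

lemma eFun_nil : ∀ k, eFun jj aa k ([] : Word (Fin d)) = 1
  | 0 => by simp [eFun]
  | k+1 => by simp [eFun, eFun_nil k]

lemma main_formula (haa : ∀ k, m ≤ k → aa k = 0) :
    ∀ (k : ℕ) (u : Word (Fin d)) (t : ℝ), (k:ℝ) ≤ t → t ≤ (k:ℝ) + 1 →
    sigRev (Ypath d m jj aa).toFun u t
      = ∑ r ∈ Finset.range (u.length + 1),
        if u.take r = List.replicate r (jj k)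
        then (aa k * Real.smoothTransition (t - k)) ^ r / (Nat.factorial r : ℝ)
          * eFun jj aa k (u.drop r)
        else 0 := by
  intro k
  induction k using Nat.strong_induction_on with
  | _ k IH =>
  have hbase : ∀ u : Word (Fin d), sigRev (Ypath d m jj aa).toFun u (k:ℝ) = eFun jj aa k u := by
    intro u
    cases k with
    | zero =>
      cases u with
      | nil => simp [sigRev, eFun]
      | cons i u => simp [sigRev, eFun, intervalIntegral.integral_same]
    | succ k' =>
      have hcast : ((k' + 1 : ℕ) : ℝ) = (k' : ℝ) + 1 := by push_cast; ring
      rw [hcast, IH k' (Nat.lt_succ_self k') u ((k':ℝ)+1) (by linarith) le_rfl]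
      have h1 : (k':ℝ) + 1 - (k' : ℝ) = 1 := by ring
      simp [eFun, h1, Real.smoothTransition.one]
  intro u
  induction u with
  | nil =>
    intro t ht1 ht2
    simp [sigRev, Finset.sum_range_one, eFun_nil]
  | cons i u' ihu =>
    intro t ht1 ht2
    set Ytf := (Ypath d m jj aa).toFun with hYtf
    have hcont : Continuous (fun s => sigRev Ytf u' s * deriv (fun z => Ytf z i) s) :=
      (sigRev_cont u').mul (Ypath_deriv_cont i)
    have hsplit : sigRev Ytf (i::u') t
        = sigRev Ytf (i::u') (k:ℝ)
          + ∫ s in (k:ℝ)..t, sigRev Ytf u' s * deriv (fun z => Ytf z i) s := by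
      simp only [sigRev]
      exact (intervalIntegral.integral_add_adjacent_intervals
        (hcont.intervalIntegrable 0 k) (hcont.intervalIntegrable k t)).symm
    rw [hsplit, hbase (i::u')]
    -- rewrite the integrand on [k,t]
    have hcongr : ∫ s in (k:ℝ)..t, sigRev Ytf u' s * deriv (fun z => Ytf z i) s
        = ∫ s in (k:ℝ)..t,
            (∑ r ∈ Finset.range (u'.length + 1),
              if u'.take r = List.replicate r (jj k)
              then (aa k ^ r / (Nat.factorial r : ℝ) * eFun jj aa k (u'.drop r)
                * (if jj k = i then aa k else 0))
                * (Real.smoothTransition (s - k) ^ r * psi (s - k))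
              else 0) := by
      apply intervalIntegral.integral_congr
      intro s hs
      rw [Set.uIcc_of_le ht1] at hs
      simp only []
      rw [ihu s hs.1 (le_trans hs.2 ht2), Ypath_deriv_eq haa k i hs.1 (le_trans hs.2 ht2),
        Finset.sum_mul]
      apply Finset.sum_congr rfl
      intro r _
      rw [ite_mul, zero_mul]
      by_cases hc : u'.take r = List.replicate r (jj k)
      · rw [if_pos hc, if_pos hc, mul_pow]
        ring
      · rw [if_neg hc, if_neg hc]
    rw [hcongr]
    rw [intervalIntegral.integral_finset_sum]
    swap
    · intro r _
      apply Continuous.intervalIntegrable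
      by_cases hc : u'.take r = List.replicate r (jj k)
      · simp only [if_pos hc]
        exact continuous_const.mul
          (((Real.smoothTransition.continuous.comp
              (continuous_id.sub continuous_const)).pow r).mul
            (psi_cont.comp (continuous_id.sub continuous_const)))
      · simp only [if_neg hc]; exact continuous_const
    -- compute each integral
    have hterm : ∀ r ∈ Finset.range (u'.length + 1),
        (∫ s in (k:ℝ)..t,
          if u'.take r = List.replicate r (jj k)
          then (aa k ^ r / (Nat.factorial r : ℝ) * eFun jj aa k (u'.drop r)
            * (if jj k = i then aa k else 0))
            * (Real.smoothTransition (s - k) ^ r * psi (s - k))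
          else 0)
        = if u'.take r = List.replicate r (jj k)
          then (aa k ^ r / (Nat.factorial r : ℝ) * eFun jj aa k (u'.drop r)
            * (if jj k = i then aa k else 0))
            * (Real.smoothTransition (t - k) ^ (r+1) / ((r:ℝ)+1))
          else 0 := by
      intro r _
      by_cases hc : u'.take r = List.replicate r (jj k)
      · simp only [if_pos hc]
        rw [intervalIntegral.integral_const_mul]
        congr 1
        have hderiv : ∀ s ∈ Set.uIcc (k:ℝ) t,
            HasDerivAt (fun z => Real.smoothTransition (z - k) ^ (r+1) / ((r:ℝ)+1))
              (Real.smoothTransition (s - k) ^ r * psi (s - k)) s := by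
          intro s _
          have h0 := (smoothTransition_hasDeriv k s).pow (r+1)
          have h1 := h0.div_const ((r:ℝ)+1)
          refine h1.congr_deriv ?_
          have hr : ((r:ℝ)+1) ≠ 0 := by positivity
          rw [Nat.add_sub_cancel, Nat.cast_add, Nat.cast_one, mul_assoc,
            mul_div_cancel_left₀ _ hr]
        rw [intervalIntegral.integral_eq_sub_of_hasDerivAt hderiv]
        · rw [sub_self, Real.smoothTransition.zero]
          rw [zero_pow (Nat.succ_ne_zero r)]
          simp
        · apply Continuous.intervalIntegrable
          exact ((Real.smoothTransition.continuous.comp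
              (continuous_id.sub continuous_const)).pow r).mul
            (psi_cont.comp (continuous_id.sub continuous_const))
      · simp only [if_neg hc, intervalIntegral.integral_zero]
    rw [Finset.sum_congr rfl hterm]
    -- now match with the RHS
    rw [show (i :: u').length + 1 = (u'.length + 1) + 1 by simp]
    conv_rhs => rw [Finset.sum_range_succ']
    rw [add_comm (eFun jj aa k (i :: u'))]
    congr 1
    swap
    · simp
    apply Finset.sum_congr rfl
    intro r _
    rw [List.take_succ_cons, List.replicate_succ, List.drop_succ_cons]
    by_cases hji : jj k = i
    · subst hji
      by_cases hc : u'.take r = List.replicate r (jj k)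
      · simp only [hc, eq_self_iff_true, if_true]
        rw [mul_pow]
        have hfac : ((Nat.factorial (r+1) : ℝ)) = ((r:ℝ)+1) * (Nat.factorial r : ℝ) := by
          rw [Nat.factorial_succ]; push_cast; ring
        rw [hfac]
        have h1 : (Nat.factorial r : ℝ) ≠ 0 := by positivity
        have h2 : ((r:ℝ)+1) ≠ 0 := by positivity
        field_simp
        ring
      · have hcon1 : ¬(jj k :: List.take r u' = jj k :: List.replicate r (jj k)) := by
          intro hcon
          injection hcon with h1 h2
          exact hc h2
        rw [if_neg hc, if_neg hcon1]
    · have hcon1 : ¬(i :: List.take r u' = jj k :: List.replicate r (jj k)) := by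
        intro hcon
        injection hcon with h1 h2
        exact hji h1.symm
      rw [if_neg hcon1]
      by_cases hc : u'.take r = List.replicate r (jj k)
      · rw [if_pos hc, if_neg hji]
        simp
      · rw [if_neg hc]

lemma sigRev_Ypath_nat (haa : ∀ k, m ≤ k → aa k = 0) :
    ∀ (k : ℕ) (u : Word (Fin d)), sigRev (Ypath d m jj aa).toFun u (k:ℝ) = eFun jj aa k u := by
  intro k u
  cases k with
  | zero =>
    cases u with
    | nil => simp [sigRev, eFun]
    | cons i u => simp [sigRev, eFun, intervalIntegral.integral_same]
  | succ k' =>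
    have hcast : ((k' + 1 : ℕ) : ℝ) = (k' : ℝ) + 1 := by push_cast; ring
    rw [hcast, main_formula haa k' u ((k':ℝ)+1) (by linarith) le_rfl]
    have h1 : (k':ℝ) + 1 - (k' : ℝ) = 1 := by ring
    simp [eFun, h1, Real.smoothTransition.one]

lemma sig_Ypath (haa : ∀ k, m ≤ k → aa k = 0) (w : Word (Fin d)) :
    sig (Ypath d m jj aa) w = eFun jj aa (m+1) w.reverse := by
  have hT : (Ypath d m jj aa).T = ((m + 1 : ℕ) : ℝ) := by
    show (m:ℝ) + 1 = _
    push_cast; ring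
  rw [sig, sigUpTo, hT, sigRev_Ypath_nat haa]

lemma Ypath_isPath : IsPath (Ypath d m jj aa) := by
  refine ⟨by show (0:ℝ) < (m:ℝ)+1; positivity, fun i => (Ypath_coord_cont i).continuousOn,
    1, ![0, (m:ℝ)+1], ?_, rfl, rfl, ?_⟩
  · intro a b hab
    fin_cases a <;> fin_cases b <;> simp_all <;> positivity
  · intro k i
    exact (Ypath_coord_contDiff i).contDiffOn

lemma Ypath_hyperplane (c : Fin d) (hjj : ∀ k, jj k ≠ c) (t : ℝ) :
    (Ypath d m jj aa).toFun t c = 0 := by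
  show (∑ k ∈ Finset.range m,
    (if jj k = c then aa k else 0) * Real.smoothTransition (t - k)) = 0
  exact Finset.sum_eq_zero (fun k _ => by rw [if_neg (hjj k), zero_mul])


noncomputable def EP (m : ℕ) (jj : ℕ → Fin d) : ℕ → Word (Fin d) → MvPolynomial (Fin m) ℝ
  | 0, u => if u = [] then 1 else 0
  | k+1, u => ∑ r ∈ Finset.range (u.length + 1),
      if u.take r = List.replicate r (jj k)
      then ((Nat.factorial r : ℝ)⁻¹) •
        ((if h : k < m then MvPolynomial.X (⟨k, h⟩ : Fin m) else 0) ^ r * EP m jj k (u.drop r))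
      else 0


lemma eval_EP (a : Fin m → ℝ) : ∀ (k : ℕ) (u : Word (Fin d)),
    MvPolynomial.eval a (EP m jj k u)
      = eFun jj (fun k' => if h : k' < m then a ⟨k', h⟩ else 0) k u := by
  intro k
  induction k with
  | zero =>
    intro u
    by_cases hu : u = [] <;> simp [EP, eFun, hu]
  | succ k ih =>
    intro u
    rw [EP, eFun, map_sum]
    apply Finset.sum_congr rfl
    intro r _
    rw [apply_ite (MvPolynomial.eval a), map_zero]
    by_cases hc : u.take r = List.replicate r (jj k)
    · have hd : (MvPolynomial.eval a) (if h : k < m then MvPolynomial.X (⟨k,h⟩ : Fin m) else 0)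
          = (if h : k < m then a ⟨k,h⟩ else 0) := by
        by_cases h : k < m <;> simp [h]
      rw [if_pos hc, if_pos hc, MvPolynomial.smul_eq_C_mul, map_mul, map_mul, map_pow,
        MvPolynomial.eval_C, ih, hd]
      ring
    · rw [if_neg hc, if_neg hc]

noncomputable def mu (m k : ℕ) : Fin m →₀ ℕ :=
  Finsupp.equivFunOnFinite.symm (fun i => if (i:ℕ) < k then 1 else 0)

lemma mu_apply (k : ℕ) (i : Fin m) : mu m k i = if (i:ℕ) < k then 1 else 0 := rfl

lemma coeff_EP_vanish : ∀ (k : ℕ) (u : Word (Fin d)) (ν : Fin m →₀ ℕ),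
    (∃ i : Fin m, k ≤ (i:ℕ) ∧ ν i ≠ 0) → MvPolynomial.coeff ν (EP m jj k u) = 0 := by
  intro k
  induction k with
  | zero =>
    rintro u ν ⟨i, -, hνi⟩
    have hν : ¬((0 : Fin m →₀ ℕ) = ν) := fun h => hνi (by rw [← h]; rfl)
    by_cases hu : u = [] <;>
      simp [EP, hu, MvPolynomial.coeff_one, hν]
  | succ k ih =>
    rintro u ν ⟨i, hki, hνi⟩
    rw [EP, MvPolynomial.coeff_sum]
    apply Finset.sum_eq_zero
    intro r _
    by_cases hc : u.take r = List.replicate r (jj k)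
    · rw [if_pos hc, MvPolynomial.coeff_smul]
      by_cases hk : k < m
      · rw [dif_pos hk, MvPolynomial.X_pow_eq_monomial, MvPolynomial.coeff_monomial_mul']
        by_cases hle : Finsupp.single (⟨k, hk⟩ : Fin m) r ≤ ν
        · rw [if_pos hle, one_mul, ih _ _ ⟨i, Nat.le_of_succ_le hki, ?_⟩, smul_zero]
          rw [Finsupp.tsub_apply, Finsupp.single_apply,
            if_neg (fun h : (⟨k, hk⟩ : Fin m) = i => by
              have := congrArg Fin.val h
              simp at this
              omega)]
          simpa using hνi
        · rw [if_neg hle, smul_zero]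
      · rw [dif_neg hk]
        cases r with
        | zero =>
          rw [pow_zero, one_mul, List.drop_zero, ih u ν ⟨i, Nat.le_of_succ_le hki, hνi⟩,
            smul_zero]
        | succ r' =>
          rw [zero_pow (Nat.succ_ne_zero r'), zero_mul, MvPolynomial.coeff_zero, smul_zero]
    · rw [if_neg hc, MvPolynomial.coeff_zero]

def tgt (jj : ℕ → Fin d) : ℕ → Word (Fin d)
  | 0 => []
  | k+1 => jj k :: tgt jj k

lemma coeff_EP_mu : ∀ k, k ≤ m → ∀ u : Word (Fin d),
    MvPolynomial.coeff (mu m k) (EP m jj k u) = if u = tgt jj k then 1 else 0 := by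
  intro k
  induction k with
  | zero =>
    intro _ u
    have hmu : mu m 0 = 0 := Finsupp.ext fun i => by simp [mu_apply]
    by_cases hu : u = [] <;>
      simp [EP, tgt, hu, hmu, MvPolynomial.coeff_zero_one]
  | succ k ih =>
    intro hk1 u
    have hk : k < m := hk1
    have hmuk : mu m (k+1) (⟨k, hk⟩ : Fin m) = 1 := by simp [mu_apply]
    have hmusub : mu m (k+1) - Finsupp.single (⟨k, hk⟩ : Fin m) 1 = mu m k := by
      ext i
      rw [Finsupp.tsub_apply, Finsupp.single_apply]
      by_cases hik : (⟨k, hk⟩ : Fin m) = i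
      · subst hik
        simp [mu_apply]
      · rw [if_neg hik, mu_apply, mu_apply]
        have hvne : (i : ℕ) ≠ k := fun h => hik (Fin.ext h.symm)
        by_cases hi : (i:ℕ) < k
        · rw [if_pos hi, if_pos (by omega)]
          simp
        · rw [if_neg hi, if_neg (by omega)]
          simp
    have hsingle_le : Finsupp.single (⟨k, hk⟩ : Fin m) 1 ≤ mu m (k+1) :=
      Finsupp.single_le_iff.mpr (by rw [hmuk])
    rw [EP, MvPolynomial.coeff_sum]
    cases u with
    | nil =>
      have hlen : List.length ([] : Word (Fin d)) + 1 = 1 := rfl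
      rw [hlen, Finset.sum_range_one]
      rw [if_pos (by simp), MvPolynomial.coeff_smul, pow_zero, one_mul, List.drop_zero]
      rw [coeff_EP_vanish k [] _ ⟨⟨k, hk⟩, le_refl k, by rw [hmuk]; exact one_ne_zero⟩]
      rw [smul_zero, if_neg (by simp [tgt])]
    | cons b u' =>
      rw [Finset.sum_eq_single 1]
      · have htake : (b :: u').take 1 = [b] := rfl
        have hdrop : (b :: u').drop 1 = u' := rfl
        have hrep : List.replicate 1 (jj k) = [jj k] := rfl
        by_cases hb : b = jj k
        · rw [if_pos (by rw [htake, hrep, hb]), MvPolynomial.coeff_smul, dif_pos hk, pow_one,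
            hdrop, MvPolynomial.coeff_X_mul', if_pos (Finsupp.mem_support_iff.mpr
              (by rw [hmuk]; exact one_ne_zero)), hmusub, ih (Nat.le_of_succ_le hk1) u']
          by_cases hu' : u' = tgt jj k
          · rw [if_pos hu', if_pos (by rw [hb, hu', tgt])]
            simp
          · rw [if_neg hu', if_neg (by
              intro hcon
              rw [tgt] at hcon
              injection hcon with h1 h2
              exact hu' h2)]
            simp
        · rw [if_neg (by
              rw [htake, hrep]
              intro hcon
              injection hcon with h1 h2
              exact hb h1), MvPolynomial.coeff_zero,
            if_neg (by
              intro hcon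
              rw [tgt] at hcon
              injection hcon with h1 h2
              exact hb h1)]
      · intro r _ hr1
        by_cases hc : (b :: u').take r = List.replicate r (jj k)
        · rw [if_pos hc, MvPolynomial.coeff_smul, dif_pos hk]
          cases r with
          | zero =>
            rw [pow_zero, one_mul, List.drop_zero,
              coeff_EP_vanish k (b :: u') _ ⟨⟨k, hk⟩, le_refl k, by
                rw [hmuk]; exact one_ne_zero⟩, smul_zero]
          | succ r' =>
            have hr2 : 2 ≤ r' + 1 + 1 := by omega
            rw [MvPolynomial.X_pow_eq_monomial, MvPolynomial.coeff_monomial_mul',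
              if_neg (by
                rw [Finsupp.single_le_iff, hmuk]
                omega), smul_zero]
        · rw [if_neg hc, MvPolynomial.coeff_zero]
      · intro hnotmem
        exact absurd (Finset.mem_range.mpr (by simp)) hnotmem

lemma EP_succ_top (u : Word (Fin d)) : EP m jj (m+1) u = EP m jj m u := by
  rw [EP, Finset.sum_range_succ']
  have h0 : (if u.take 0 = List.replicate 0 (jj m)
      then ((Nat.factorial 0 : ℝ)⁻¹) •
        ((if h : m < m then MvPolynomial.X (⟨m, h⟩ : Fin m) else 0) ^ 0 * EP m jj m (u.drop 0))
      else 0) = EP m jj m u := by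
    rw [if_pos (by simp), pow_zero, one_mul, List.drop_zero]
    simp
  rw [h0, Finset.sum_eq_zero, zero_add]
  intro r _
  rw [dif_neg (lt_irrefl m), zero_pow (Nat.succ_ne_zero r), zero_mul, smul_zero]
  exact ite_self 0

lemma tgt_eq (w₀ : Word (Fin d)) (e₁ : Fin d) :
    ∀ k, k ≤ w₀.length → tgt (fun k' => w₀.getD k' e₁) k = (w₀.take k).reverse := by
  intro k
  induction k with
  | zero => simp [tgt]
  | succ k ih =>
    intro hk
    have hk' : k < w₀.length := hk
    rw [tgt, ih (Nat.le_of_succ_le hk)]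
    have htake : List.take (k+1) w₀ = List.take k w₀ ++ [w₀[k]] := by
      rw [List.take_succ, List.getElem?_eq_getElem hk']
      rfl
    rw [htake, List.reverse_append, List.reverse_singleton, List.singleton_append]
    congr 1
    rw [List.getD_eq_getElem?_getD, List.getElem?_eq_getElem hk', Option.getD_some]

end S6


/-- For `d ≥ 2` and a path `X` in `ℝ^d` (letter `1` = index `0`),
`⟨σ(X), w⟩ = 0` for all words `w` containing the letter `1` iff `σ(X) = σ(QX)` where
`Q` is the orthogonal projection onto the hyperplane `{x₁ = 0}`; moreover, the ideal
`ℐ` of the set of paths contained in that hyperplane is exactly the span of the words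
containing the letter `1`. -/
theorem statement6 {d : ℕ} (hd : 2 ≤ d) (X : RawPath (Fin d)) (hX : IsPath X) :
    ((∀ w : Word (Fin d), (⟨0, by omega⟩ : Fin d) ∈ w → sig X w = 0) ↔
      (∀ w : Word (Fin d),
        sig X w =
          sig (⟨X.T, fun t i => if i = (⟨0, by omega⟩ : Fin d) then 0 else X.toFun t i⟩ :
            RawPath (Fin d)) w)) ∧
    Idl {Y : RawPath (Fin d) | IsPath Y ∧
          ∀ t ∈ Set.Icc (0 : ℝ) Y.T, Y.toFun t (⟨0, by omega⟩ : Fin d) = 0} =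
      Submodule.span ℝ {x : TA (Fin d) |
        ∃ w : Word (Fin d), (⟨0, by omega⟩ : Fin d) ∈ w ∧ x = Finsupp.single w 1} := by
  have hd1 : 0 < d := by omega
  set ℓ0 : Fin d := ⟨0, by omega⟩ with hℓ0
  set QX : RawPath (Fin d) :=
    ⟨X.T, fun t i => if i = ℓ0 then 0 else X.toFun t i⟩ with hQX
  have hQ0 : ∀ t, QX.toFun t ℓ0 = 0 := by
    intro t
    show (if ℓ0 = ℓ0 then 0 else X.toFun t ℓ0) = 0
    exact if_pos rfl
  have hsigQ : ∀ w : Word (Fin d), ℓ0 ∈ w → sig QX w = 0 := by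
    intro w hw
    exact S6.sigRev_zero_of_const ℓ0 QX.toFun hQ0 w.reverse (List.mem_reverse.mpr hw) QX.T
  constructor
  · constructor
    · intro h w
      by_cases h0 : ℓ0 ∈ w
      · rw [h w h0, hsigQ w h0]
      · show sigRev X.toFun w.reverse X.T = sigRev QX.toFun w.reverse QX.T
        have hT : QX.T = X.T := rfl
        rw [hT, S6.sigRev_congr (F := X.toFun) (G := QX.toFun) w.reverse ?_]
        intro i hi t
        have hne : ¬(i = ℓ0) := fun hiℓ => h0 (by rw [← hiℓ]; exact List.mem_reverse.mp hi)
        exact (if_neg hne).symm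
    · intro h w h0
      rw [h w, hsigQ w h0]
  · apply le_antisymm
    · -- Idl ≤ span
      intro x hx
      have hxker : ∀ Y, Y ∈ {Y : RawPath (Fin d) | IsPath Y ∧
          ∀ t ∈ Set.Icc (0 : ℝ) Y.T, Y.toFun t ℓ0 = 0} →
          Finsupp.linearCombination ℝ (sig Y) x = 0 := by
        intro Y hY
        have := (Submodule.mem_iInf _).mp hx Y
        have := (Submodule.mem_iInf _).mp this hY
        exact this
      have hSimg : {x : TA (Fin d) | ∃ w : Word (Fin d), ℓ0 ∈ w ∧ x = Finsupp.single w 1}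
          = (fun w : Word (Fin d) => Finsupp.single w (1:ℝ)) '' {w | ℓ0 ∈ w} := by
        ext y
        constructor
        · rintro ⟨w, h1, h2⟩; exact ⟨w, h1, h2.symm⟩
        · rintro ⟨w, h1, h2⟩; exact ⟨w, h1, h2.symm⟩
      rw [hSimg, ← Finsupp.supported_eq_span_single]
      rw [Finsupp.mem_supported]
      intro w₀ hw₀
      have hw₀' : w₀ ∈ x.support := hw₀
      simp only [Set.mem_setOf_eq]
      by_contra h0
      -- set up the path construction
      set mm : ℕ := w₀.length with hmm
      set e₁ : Fin d := ⟨1, by omega⟩ with he₁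
      set jj : ℕ → Fin d := fun k => w₀.getD k e₁ with hjj
      have hjjne : ∀ k, jj k ≠ ℓ0 := by
        intro k
        by_cases hk : k < w₀.length
        · intro hcon
          apply h0
          have hcon' : w₀.getD k e₁ = ℓ0 := hcon
          rw [List.getD_eq_getElem?_getD, List.getElem?_eq_getElem hk, Option.getD_some] at hcon'
          rw [← hcon']
          exact List.getElem_mem hk
        · show ¬ (w₀.getD k e₁ = ℓ0)
          rw [List.getD_eq_getElem?_getD, List.getElem?_eq_none (by omega), Option.getD_none]
          intro hcon
          have := congrArg Fin.val hcon
          simp [he₁, hℓ0] at this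
      -- the polynomial
      set Q : MvPolynomial (Fin mm) ℝ :=
        ∑ w ∈ x.support, x w • S6.EP mm jj (mm+1) w.reverse with hQdef
      have hQ0' : Q = 0 := by
        apply MvPolynomial.funext
        intro a
        rw [map_zero]
        set aa : ℕ → ℝ := fun k => if h : k < mm then a ⟨k, h⟩ else 0 with haadef
        have haa : ∀ k, mm ≤ k → aa k = 0 := by
          intro k hk
          rw [haadef]
          exact dif_neg (by omega)
        have hYmem : S6.Ypath d mm jj aa ∈ {Y : RawPath (Fin d) | IsPath Y ∧
            ∀ t ∈ Set.Icc (0 : ℝ) Y.T, Y.toFun t ℓ0 = 0} :=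
          ⟨S6.Ypath_isPath, fun t _ => S6.Ypath_hyperplane ℓ0 hjjne t⟩
        have hker := hxker _ hYmem
        rw [Finsupp.linearCombination_apply, Finsupp.sum] at hker
        rw [hQdef, map_sum]
        rw [← hker]
        apply Finset.sum_congr rfl
        intro w _
        rw [MvPolynomial.smul_eq_C_mul, map_mul, MvPolynomial.eval_C, S6.eval_EP,
          S6.sig_Ypath haa w, smul_eq_mul]
      have hcoeff := congrArg (MvPolynomial.coeff (S6.mu mm mm)) hQ0'
      rw [hQdef, MvPolynomial.coeff_sum, MvPolynomial.coeff_zero] at hcoeff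
      have htgt : S6.tgt jj mm = w₀.reverse := by
        rw [hjj]
        rw [S6.tgt_eq w₀ e₁ mm le_rfl]
        rw [hmm, List.take_length]
      have hterm : ∀ w ∈ x.support,
          MvPolynomial.coeff (S6.mu mm mm) (x w • S6.EP mm jj (mm+1) w.reverse)
            = if w = w₀ then x w else 0 := by
        intro w _
        rw [MvPolynomial.coeff_smul, S6.EP_succ_top, S6.coeff_EP_mu mm le_rfl, htgt]
        by_cases hww : w = w₀
        · rw [if_pos (by rw [hww]), if_pos hww, smul_eq_mul, mul_one]
        · rw [if_neg (fun hc => hww (List.reverse_injective hc)), if_neg hww, smul_zero]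
      rw [Finset.sum_congr rfl hterm, Finset.sum_ite_eq' x.support w₀ (fun w => x w),
        if_pos hw₀'] at hcoeff
      exact (Finsupp.mem_support_iff.mp hw₀') hcoeff
    · -- span ≤ Idl
      rw [Submodule.span_le]
      rintro y ⟨w, hw, rfl⟩
      rw [SetLike.mem_coe, Idl]
      rw [Submodule.mem_iInf]
      intro Y
      rw [Submodule.mem_iInf]
      intro hY
      rw [LinearMap.mem_ker, Finsupp.linearCombination_single, one_smul]
      show sigRev Y.toFun w.reverse Y.T = 0
      exact S6.sigRev_zero_of_Icc ℓ0 Y.toFun Y.T hY.2 w.reverse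
        (List.mem_reverse.mpr hw) Y.T ⟨le_of_lt hY.1.1, le_refl _⟩

end PathVarieties
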